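/- Let A be a commutative ring with 1, let n ≥ 1 be a natural number, and let α, f ∈ A satisfy α^n + f·α + f = 0. Then α + 1 is a unit in A. -/
import Mathlib

/-- If `α^n + f*α + f = 0` in a commutative ring with `n ≥ 1`, then `α + 1` is a unit. -/
theorem stmt0 {A : Type*} [CommRing A] (n : ℕ) (hn : 1 ≤ n) (α f : A)
    (h : α ^ n + f * α + f = 0) : IsUnit (α + 1) := by
  have h1 : α ^ n = -(f * (α + 1)) := by ring_nf; linear_combination h
  have d1 : (α + 1) ∣ α ^ n := ⟨-f, by rw [h1]; ring⟩
  have d2 : (α + 1) ∣ α ^ n - (-1) ^ n := by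
    simpa using sub_dvd_pow_sub_pow α (-1) n
  have d3 : (α + 1) ∣ (-1 : A) ^ n := (dvd_sub_right d1).mp d2 |> fun h => by
    simpa using (dvd_neg.mpr h)
  exact isUnit_of_dvd_unit d3 ((IsUnit.neg isUnit_one).pow n)
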